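/- Let ρ₁, ρ₂, ρ₃ be 2×2 complex density matrices, each diagonal in the standard basis of ℂ², and let M₁, M₂, M₃ be 2×2 positive semidefinite complex matrices with M₁ + M₂ + M₃ = I. Suppose Tr(M_i ρ_i) = 0 for all i ∈ {1,2,3}, and let γ_k = (1/3)·∑_{i=1}^{3} Tr(M_k ρ_i) for k ∈ {1,2,3}. Then there exists an index j with γ_j = 0 or γ_j = 2/3. -/

import Mathlib

open Matrix ComplexOrder

lemma key_real (a b p q : Fin 3 → ℝ)
    (ha : ∀ k, 0 ≤ a k) (hb : ∀ k, 0 ≤ b k)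
    (hp : ∀ i, 0 ≤ p i) (hq : ∀ i, 0 ≤ q i)
    (hpq : ∀ i, p i + q i = 1)
    (hsa : a 0 + a 1 + a 2 = 1) (hsb : b 0 + b 1 + b 2 = 1)
    (hz : ∀ i, a i * p i + b i * q i = 0)
    (γ : Fin 3 → ℝ)
    (hγ : ∀ k, 3 * γ k = a k * (p 0 + p 1 + p 2) + b k * (q 0 + q 1 + q 2)) :
    ∃ j, γ j = 0 ∨ γ j = 2/3 := by
  have hap : ∀ i, a i * p i = 0 := by
    intro i
    have h1 := mul_nonneg (ha i) (hp i)
    have h2 := mul_nonneg (hb i) (hq i)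
    have := hz i; linarith
  have hbq : ∀ i, b i * q i = 0 := by
    intro i; have := hz i; have := hap i; linarith
  by_cases hab : ∃ i, a i = 0 ∧ b i = 0
  · obtain ⟨i, hai, hbi⟩ := hab
    exact ⟨i, Or.inl (by have := hγ i; rw [hai, hbi] at this; linarith)⟩
  · push_neg at hab
    have hP : ∀ i, p i = 0 ∨ p i = 1 := by
      intro i
      rcases mul_eq_zero.mp (hap i) with h | h
      · rcases mul_eq_zero.mp (hbq i) with h' | h'
        · exact absurd h' (hab i h)
        · right; have := hpq i; linarith
      · left; exact h
    have hfact : ∀ i, (p i = 0 → b i = 0) ∧ (p i = 1 → a i = 0) := by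
      intro i
      constructor
      · intro h; have hq1 : q i = 1 := by have := hpq i; linarith
        have := hbq i; rw [hq1, mul_one] at this; exact this
      · intro h; have := hap i; rw [h, mul_one] at this; exact this
    have hQ : ∀ i, q i = 1 - p i := by intro i; have := hpq i; linarith
    have g0 := hγ 0; have g1 := hγ 1; have g2 := hγ 2
    rw [hQ 0, hQ 1, hQ 2] at g0 g1 g2
    obtain ⟨hb0, ha0⟩ := hfact 0
    obtain ⟨hb1, ha1⟩ := hfact 1
    obtain ⟨hb2, ha2⟩ := hfact 2
    rcases hP 0 with h0 | h0 <;> rcases hP 1 with h1 | h1 <;> rcases hP 2 with h2 | h2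
    · exfalso; have := hb0 h0; have := hb1 h1; have := hb2 h2; linarith
    · refine ⟨2, Or.inr ?_⟩
      have e0 := hb0 h0; have e1 := hb1 h1; have e2 := ha2 h2
      have : b 2 = 1 := by linarith
      rw [h0, h1, h2, e2, this] at g2; linarith
    · refine ⟨1, Or.inr ?_⟩
      have e0 := hb0 h0; have e2 := hb2 h2; have e1 := ha1 h1
      have : b 1 = 1 := by linarith
      rw [h0, h1, h2, e1, this] at g1; linarith
    · refine ⟨0, Or.inr ?_⟩
      have e1 := ha1 h1; have e2 := ha2 h2; have e0 := hb0 h0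
      have : a 0 = 1 := by linarith
      rw [h0, h1, h2, e0, this] at g0; linarith
    · refine ⟨0, Or.inr ?_⟩
      have e1 := hb1 h1; have e2 := hb2 h2; have e0 := ha0 h0
      have : b 0 = 1 := by linarith
      rw [h0, h1, h2, e0, this] at g0; linarith
    · refine ⟨1, Or.inr ?_⟩
      have e0 := ha0 h0; have e2 := ha2 h2; have e1 := hb1 h1
      have : a 1 = 1 := by linarith
      rw [h0, h1, h2, e1, this] at g1; linarith
    · refine ⟨2, Or.inr ?_⟩
      have e0 := ha0 h0; have e1 := ha1 h1; have e2 := hb2 h2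
      have : a 2 = 1 := by linarith
      rw [h0, h1, h2, e2, this] at g2; linarith
    · exfalso; have := ha0 h0; have := ha1 h1; have := ha2 h2; linarith

lemma psd_diag' (A : Matrix (Fin 2) (Fin 2) ℂ) (hA : A.PosSemidef) (j : Fin 2) :
    A j j = ((A j j).re : ℂ) ∧ 0 ≤ (A j j).re := by
  have h : (0:ℂ) ≤ A j j := by
    have h := hA.dotProduct_mulVec_nonneg (Pi.single j 1)
    simpa [dotProduct, Matrix.mulVec, Pi.single_apply, Finset.sum_ite_eq] using h
  rw [Complex.le_def] at h
  exact ⟨by apply Complex.ext <;> simp [← h.2], by simpa using h.1⟩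

/-- **Quantum advantage certifies coherence.** If a quantum strategy uses encoding states
that are all diagonal in the standard basis (no coherence) and perfectly satisfies
condition (h1) of the 3-restaurant game, then the resulting visiting-probability vector
`γ` must have some component equal to `0` or `2/3`. -/
theorem diagonal_states_gamma_constraint
    (ρ : Fin 3 → Matrix (Fin 2) (Fin 2) ℂ)
    (hρ : ∀ i, (ρ i).PosSemidef ∧ (ρ i).trace = 1)
    (hdiag : ∀ i, ∀ a b : Fin 2, a ≠ b → ρ i a b = 0)
    (M : Fin 3 → Matrix (Fin 2) (Fin 2) ℂ)
    (hM : ∀ k, (M k).PosSemidef) (hMsum : ∑ k, M k = 1)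
    (h1 : ∀ i, (M i * ρ i).trace = 0)
    (γ : Fin 3 → ℝ)
    (hγ : ∀ k, ((γ k : ℝ) : ℂ) = (1/3 : ℂ) * ∑ i, (M k * ρ i).trace) :
    ∃ j, γ j = 0 ∨ γ j = 2/3 := by
  set a : Fin 3 → ℝ := fun k => (M k 0 0).re with ha_def
  set b : Fin 3 → ℝ := fun k => (M k 1 1).re with hb_def
  set p : Fin 3 → ℝ := fun i => (ρ i 0 0).re with hp_def
  set q : Fin 3 → ℝ := fun i => (ρ i 1 1).re with hq_def
  have hMe : ∀ k, M k 0 0 = ((a k : ℝ) : ℂ) ∧ M k 1 1 = ((b k : ℝ) : ℂ) :=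
    fun k => ⟨(psd_diag' _ (hM k) 0).1, (psd_diag' _ (hM k) 1).1⟩
  have hρe : ∀ i, ρ i 0 0 = ((p i : ℝ) : ℂ) ∧ ρ i 1 1 = ((q i : ℝ) : ℂ) :=
    fun i => ⟨(psd_diag' _ (hρ i).1 0).1, (psd_diag' _ (hρ i).1 1).1⟩
  have ha : ∀ k, 0 ≤ a k := fun k => (psd_diag' _ (hM k) 0).2
  have hb : ∀ k, 0 ≤ b k := fun k => (psd_diag' _ (hM k) 1).2
  have hp : ∀ i, 0 ≤ p i := fun i => (psd_diag' _ (hρ i).1 0).2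
  have hq : ∀ i, 0 ≤ q i := fun i => (psd_diag' _ (hρ i).1 1).2
  have htr : ∀ k i, (M k * ρ i).trace = ((a k * p i + b k * q i : ℝ) : ℂ) := by
    intro k i
    rw [Matrix.trace_fin_two, Matrix.mul_apply, Matrix.mul_apply,
      Fin.sum_univ_two, Fin.sum_univ_two, hdiag i 1 0 (by decide),
      hdiag i 0 1 (by decide), (hMe k).1, (hMe k).2, (hρe i).1, (hρe i).2]
    push_cast; ring
  have hpq : ∀ i, p i + q i = 1 := by
    intro i
    have := (hρ i).2
    rw [Matrix.trace_fin_two, (hρe i).1, (hρe i).2] at this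
    exact_mod_cast this
  have hsum : ∀ j : Fin 2, M 0 j j + M 1 j j + M 2 j j = 1 := by
    intro j
    have := congrArg (fun A : Matrix (Fin 2) (Fin 2) ℂ => A j j) hMsum
    simpa [Matrix.sum_apply, Fin.sum_univ_three, Matrix.one_apply] using this
  have hsa : a 0 + a 1 + a 2 = 1 := by
    have := hsum 0
    rw [(hMe 0).1, (hMe 1).1, (hMe 2).1] at this
    exact_mod_cast this
  have hsb : b 0 + b 1 + b 2 = 1 := by
    have := hsum 1
    rw [(hMe 0).2, (hMe 1).2, (hMe 2).2] at this
    exact_mod_cast this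
  have hz : ∀ i, a i * p i + b i * q i = 0 := by
    intro i
    have := h1 i
    rw [htr i i] at this
    exact_mod_cast this
  have hg : ∀ k, 3 * γ k = a k * (p 0 + p 1 + p 2) + b k * (q 0 + q 1 + q 2) := by
    intro k
    have h := hγ k
    rw [Fin.sum_univ_three, htr k 0, htr k 1, htr k 2] at h
    have h2 : ((3 * γ k : ℝ) : ℂ)
        = ((a k * (p 0 + p 1 + p 2) + b k * (q 0 + q 1 + q 2) : ℝ) : ℂ) := by
      push_cast at h ⊢
      linear_combination 3 * h
    exact_mod_cast h2
  -- now pure real arithmetic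
  clear_value a b p q
  clear hMe hρe htr hsum hγ h1 hMsum hM hρ hdiag
  exact key_real a b p q ha hb hp hq hpq hsa hsb hz γ hg
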